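/- arXiv:1907.02471 — 2 statements merged into one kernel-verified Lean document; each statement's English description precedes it below -/
import Mathlib

section
/- Let S : ℝ²ⁿ → ℝ²ⁿ be a linear bijection preserving the standard symplectic form σ((x,p),(x′,p′)) = p·x′ − p′·x, and let U : L²(ℝⁿ) → L²(ℝⁿ) be a unitary operator satisfying U ∘ T(z) ∘ U⁻¹ = T(Sz) for all z ∈ ℝ²ⁿ. Then for every a ∈ L¹(ℝ²ⁿ) and all φ, ψ, χ ∈ L²(ℝⁿ): ∫_{ℝ²ⁿ} a(S⁻¹z) · (ψ|T(z)φ) · (T(z)φ|χ) dz = ∫_{ℝ²ⁿ} a(z) · (U⁻¹ψ | T(z)(U⁻¹φ)) · (T(z)(U⁻¹φ) | U⁻¹χ) dz. (This is the symplectic covariance Op_φ(a ∘ S⁻¹) = U Op_{U⁻¹φ}(a) U⁻¹ of Toeplitz operators, in weak form.) -/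
open MeasureTheory Complex Real Filter

noncomputable section

/-- Phase space ℝ²ⁿ = ℝⁿ_x × ℝⁿ_p. -/
abbrev Phase (n : ℕ) := (Fin n → ℝ) × (Fin n → ℝ)

/-- Euclidean dot product on ℝⁿ. -/
def dotR {n : ℕ} (p y : Fin n → ℝ) : ℝ := ∑ i, p i * y i

/-- The cross-Wigner transform
`W(ψ,φ)(x,p) = (2πℏ)^{-n} ∫ e^{-i p·y/ℏ} ψ(x + y/2) conj(φ(x − y/2)) dy`. -/
def crossWigner (ℏ : ℝ) {n : ℕ} (ψ φ : (Fin n → ℝ) → ℂ) (z : Phase n) : ℂ :=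
  (((2 * π * ℏ) ^ n : ℝ)⁻¹ : ℂ) *
    ∫ y : Fin n → ℝ,
      Complex.exp (-Complex.I * ((dotR z.2 y : ℝ) : ℂ) / (ℏ : ℂ)) *
        ψ (z.1 + (2 : ℝ)⁻¹ • y) * (starRingEnd ℂ) (φ (z.1 - (2 : ℝ)⁻¹ • y))

/-- The L² inner product `(ψ|φ) = ∫ ψ(x) conj(φ(x)) dx`, linear in the first argument. -/
def L2inner {n : ℕ} (ψ φ : (Fin n → ℝ) → ℂ) : ℂ :=
  ∫ x : Fin n → ℝ, ψ x * (starRingEnd ℂ) (φ x)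

/-- The Heisenberg–Weyl operator:
`(T(z₀)ψ)(x) = e^{(i/ℏ)(p₀·x − p₀·x₀/2)} ψ(x − x₀)` for `z₀ = (x₀, p₀)`. -/
def HW (ℏ : ℝ) {n : ℕ} (z₀ : Phase n) (ψ : (Fin n → ℝ) → ℂ) : (Fin n → ℝ) → ℂ :=
  fun x => Complex.exp (Complex.I / (ℏ : ℂ) *
      ((dotR z₀.2 x - dotR z₀.2 z₀.1 / 2 : ℝ) : ℂ)) * ψ (x - z₀.1)

/-- Convolution on phase space ℝ²ⁿ: `(a ∗ b)(z) = ∫ a(z′) b(z − z′) dz′`. -/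
def convP {n : ℕ} (a b : Phase n → ℂ) (z : Phase n) : ℂ :=
  ∫ z' : Phase n, a z' * b (z - z')

/-- The standard symplectic form `σ((x,p),(x′,p′)) = p·x′ − p′·x` on ℝ²ⁿ. -/
def symp {n : ℕ} (z w : Phase n) : ℝ := dotR z.2 w.1 - dotR w.2 z.1

/-- The standard (coherent-state) Gaussian `φ₀(x) = (πℏ)^{-n/4} e^{-|x|²/(2ℏ)}`. -/
def stdGauss (ℏ : ℝ) (n : ℕ) : (Fin n → ℝ) → ℂ :=
  fun x => (((π * ℏ) ^ ((n : ℝ) / 4))⁻¹ : ℝ) *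
    Complex.exp (((-(∑ i, x i ^ 2) / (2 * ℏ) : ℝ)) : ℂ)

/-! ### Auxiliary lemmas -/

lemma dotR_add_left {n : ℕ} (p q y : Fin n → ℝ) : dotR (p + q) y = dotR p y + dotR q y := by
  simp [dotR, add_mul, Finset.sum_add_distrib]

lemma dotR_smul_left {n : ℕ} (c : ℝ) (p y : Fin n → ℝ) : dotR (c • p) y = c * dotR p y := by
  simp [dotR, Finset.mul_sum, mul_assoc]

lemma dotR_add_right {n : ℕ} (p y z : Fin n → ℝ) : dotR p (y + z) = dotR p y + dotR p z := by
  simp [dotR, mul_add, Finset.sum_add_distrib]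

lemma dotR_smul_right {n : ℕ} (c : ℝ) (p y : Fin n → ℝ) : dotR p (c • y) = c * dotR p y := by
  simp only [dotR, Finset.mul_sum, Pi.smul_apply, smul_eq_mul]
  exact Finset.sum_congr rfl fun i _ => by ring

/-- The symplectic form as a bilinear form. -/
def sympBilin (n : ℕ) : LinearMap.BilinForm ℝ (Phase n) :=
  LinearMap.mk₂ ℝ symp
    (fun z z' w => by simp [symp, dotR_add_left, dotR_add_right]; ring)
    (fun c z w => by simp [symp, dotR_smul_left, dotR_smul_right]; ring)
    (fun z w w' => by simp [symp, dotR_add_left, dotR_add_right]; ring)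
    (fun c z w => by simp [symp, dotR_smul_left, dotR_smul_right]; ring)

lemma sympBilin_nondegenerate (n : ℕ) : (sympBilin n).Nondegenerate := by
  suffices hL : LinearMap.SeparatingLeft (sympBilin n) by
    exact ⟨hL, fun z hz => hL z (fun w => by
      have := hz w; simp only [sympBilin, LinearMap.mk₂_apply, symp] at this ⊢; linarith)⟩
  intro z hz
  have h := hz (-z.2, z.1)
  simp only [sympBilin, LinearMap.mk₂_apply, symp] at h
  have h1 : dotR z.2 (-z.2) = -∑ i, z.2 i ^ 2 := by
    simp [dotR]; congr 1; funext i; ring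
  have h2 : dotR z.1 z.1 = ∑ i, z.1 i ^ 2 := by
    simp [dotR]; congr 1; funext i; ring
  rw [h1, h2] at h
  have hsum : (∑ i, z.2 i ^ 2) + ∑ i, z.1 i ^ 2 = 0 := by linarith
  have h2z : ∑ i, z.2 i ^ 2 = 0 ∧ ∑ i, z.1 i ^ 2 = 0 := by
    constructor <;> nlinarith [Finset.sum_nonneg (fun i (_ : i ∈ Finset.univ) => sq_nonneg (z.2 i)),
      Finset.sum_nonneg (fun i (_ : i ∈ Finset.univ) => sq_nonneg (z.1 i))]
  have e2 : z.2 = 0 := by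
    funext i
    have := (Finset.sum_eq_zero_iff_of_nonneg
      (fun j (_ : j ∈ Finset.univ) => sq_nonneg (z.2 j))).mp h2z.1 i (Finset.mem_univ i)
    exact pow_eq_zero_iff (two_ne_zero) |>.mp this
  have e1 : z.1 = 0 := by
    funext i
    have := (Finset.sum_eq_zero_iff_of_nonneg
      (fun j (_ : j ∈ Finset.univ) => sq_nonneg (z.1 j))).mp h2z.2 i (Finset.mem_univ i)
    exact pow_eq_zero_iff (two_ne_zero) |>.mp this
  exact Prod.ext e1 e2

/-- A symplectic linear equivalence has determinant ±1. -/
lemma symplectic_det_sq_one {n : ℕ} (S : Phase n ≃ₗ[ℝ] Phase n)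
    (hS : ∀ z w : Phase n, symp (S z) (S w) = symp z w) :
    (LinearMap.det (S : Phase n →ₗ[ℝ] Phase n)) ^ 2 = 1 := by
  classical
  set b : Module.Basis (Fin n ⊕ Fin n) ℝ (Phase n) :=
    (Pi.basisFun ℝ (Fin n)).prod (Pi.basisFun ℝ (Fin n)) with hb
  set B := sympBilin n with hB
  have hcomp : LinearMap.BilinForm.comp B (S : Phase n →ₗ[ℝ] Phase n) (S : Phase n →ₗ[ℝ] Phase n) = B := by
    apply LinearMap.ext; intro z; apply LinearMap.ext; intro w
    simpa [hB, sympBilin] using hS z w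
  have hmat := congrArg (BilinForm.toMatrix b) hcomp
  erw [LinearMap.BilinForm.toMatrix_comp (b := b) (c := b)] at hmat
  have hdet := congrArg Matrix.det hmat
  rw [Matrix.det_mul, Matrix.det_mul, Matrix.det_transpose] at hdet
  have hBdet : (BilinForm.toMatrix b B).det ≠ 0 :=
    (LinearMap.BilinForm.nondegenerate_iff_det_ne_zero b).mp (sympBilin_nondegenerate n)
  have hMdet : (LinearMap.toMatrix b b (S : Phase n →ₗ[ℝ] Phase n)).det =
      LinearMap.det (S : Phase n →ₗ[ℝ] Phase n) := LinearMap.det_toMatrix b _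
  set d := (LinearMap.toMatrix b b (S : Phase n →ₗ[ℝ] Phase n)).det with hdd
  set k := (BilinForm.toMatrix b B).det with hk
  have hk2 : ((LinearMap.BilinForm.toMatrix b) B).det = k := by rw [hk]; congr!
  have h1 : (d * d) * k = 1 * k := by linear_combination hdet - d ^ 2 * hk2
  have h2 : d * d = 1 := mul_right_cancel₀ hBdet h1
  rw [← hMdet, sq]
  exact h2

/-- A symplectic linear equivalence preserves Lebesgue measure on phase space. -/
lemma symplectic_measure_preserving {n : ℕ} (S : Phase n ≃ₗ[ℝ] Phase n)
    (hS : ∀ z w : Phase n, symp (S z) (S w) = symp z w) :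
    Measure.map (S : Phase n →ₗ[ℝ] Phase n) (volume : Measure (Phase n)) = volume := by
  have hd2 := symplectic_det_sq_one S hS
  have hd : LinearMap.det (S : Phase n →ₗ[ℝ] Phase n) ≠ 0 := by
    intro h; rw [h] at hd2; norm_num at hd2
  haveI : (volume : Measure (Phase n)).IsAddHaarMeasure :=
    Measure.prod.instIsAddHaarMeasure volume volume
  rw [MeasureTheory.Measure.map_linearMap_addHaar_eq_smul_addHaar _ hd]
  have habs : |(LinearMap.det (S : Phase n →ₗ[ℝ] Phase n))⁻¹| = 1 := by
    rw [abs_inv]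
    have : |LinearMap.det (S : Phase n →ₗ[ℝ] Phase n)| = 1 := by
      nlinarith [abs_nonneg (LinearMap.det (S : Phase n →ₗ[ℝ] Phase n)),
        sq_abs (LinearMap.det (S : Phase n →ₗ[ℝ] Phase n))]
    rw [this]; norm_num
  rw [habs]; simp

/-- Symplectic covariance of Toeplitz operators, in weak form: if the unitary `U` on `L²(ℝⁿ)`
satisfies `U T(z) U⁻¹ = T(Sz)` for a linear symplectic bijection `S`, then
`Op_φ(a ∘ S⁻¹) = U Op_{U⁻¹φ}(a) U⁻¹`. -/
theorem toeplitz_symplectic_covariance (ℏ : ℝ) (hℏ : 0 < ℏ) (n : ℕ) (hn : 1 ≤ n)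
    (S : Phase n ≃ₗ[ℝ] Phase n) (hS : ∀ z w : Phase n, symp (S z) (S w) = symp z w)
    (U Uinv : ((Fin n → ℝ) → ℂ) → ((Fin n → ℝ) → ℂ))
    (hUlin : ∀ (c : ℂ) (f g : (Fin n → ℝ) → ℂ),
      U (fun x => c * f x + g x) = fun x => c * U f x + U g x)
    (hUinv₁ : ∀ f, Uinv (U f) = f) (hUinv₂ : ∀ f, U (Uinv f) = f)
    (hUmem : ∀ f, MeasureTheory.MemLp f 2 (volume : Measure (Fin n → ℝ)) →
      MeasureTheory.MemLp (U f) 2 (volume : Measure (Fin n → ℝ)))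
    (hUinner : ∀ f g, L2inner (U f) (U g) = L2inner f g)
    (hUT : ∀ (z : Phase n) (f : (Fin n → ℝ) → ℂ), U (HW ℏ z (Uinv f)) = HW ℏ (S z) f)
    (a : Phase n → ℂ) (ha : MeasureTheory.Integrable a (volume : Measure (Phase n)))
    (φ ψ χ : (Fin n → ℝ) → ℂ)
    (hφ : MeasureTheory.MemLp φ 2 (volume : Measure (Fin n → ℝ)))
    (hψ : MeasureTheory.MemLp ψ 2 (volume : Measure (Fin n → ℝ)))
    (hχ : MeasureTheory.MemLp χ 2 (volume : Measure (Fin n → ℝ))) :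
    ∫ z : Phase n, a (S.symm z) * L2inner ψ (HW ℏ z φ) * L2inner (HW ℏ z φ) χ =
      ∫ z : Phase n,
        a z * L2inner (Uinv ψ) (HW ℏ z (Uinv φ)) * L2inner (HW ℏ z (Uinv φ)) (Uinv χ) := by
  -- Pointwise identification of the right-hand integrand
  have key : ∀ z : Phase n,
      a z * L2inner (Uinv ψ) (HW ℏ z (Uinv φ)) * L2inner (HW ℏ z (Uinv φ)) (Uinv χ) =
      a z * L2inner ψ (HW ℏ (S z) φ) * L2inner (HW ℏ (S z) φ) χ := by
    intro z
    have h1 : L2inner (Uinv ψ) (HW ℏ z (Uinv φ)) = L2inner ψ (HW ℏ (S z) φ) := by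
      have := hUinner (Uinv ψ) (HW ℏ z (Uinv φ))
      rw [hUinv₂, hUT] at this
      exact this.symm
    have h2 : L2inner (HW ℏ z (Uinv φ)) (Uinv χ) = L2inner (HW ℏ (S z) φ) χ := by
      have := hUinner (HW ℏ z (Uinv φ)) (Uinv χ)
      rw [hUinv₂, hUT] at this
      exact this.symm
    rw [h1, h2]
  simp only [key]
  -- Change of variables z ↦ S z
  set F : Phase n → ℂ := fun z => a (S.symm z) * L2inner ψ (HW ℏ z φ) * L2inner (HW ℏ z φ) χ
    with hF
  have hFS : ∀ z : Phase n, F (S z) = a z * L2inner ψ (HW ℏ (S z) φ) * L2inner (HW ℏ (S z) φ) χ :=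
    fun z => by simp [hF]
  have hmap := symplectic_measure_preserving S hS
  -- S as a measurable equivalence
  have hScont : Continuous (S : Phase n → Phase n) :=
    LinearMap.continuous_of_finiteDimensional (S : Phase n →ₗ[ℝ] Phase n)
  have hSsymmcont : Continuous (S.symm : Phase n → Phase n) :=
    LinearMap.continuous_of_finiteDimensional (S.symm : Phase n →ₗ[ℝ] Phase n)
  let e : Phase n ≃ₜ Phase n :=
    { toEquiv := S.toEquiv, continuous_toFun := hScont, continuous_invFun := hSsymmcont }
  have hmap' : Measure.map (e.toMeasurableEquiv : Phase n → Phase n) (volume : Measure (Phase n))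
      = volume := by
    have : (e.toMeasurableEquiv : Phase n → Phase n) = ((S : Phase n →ₗ[ℝ] Phase n) : Phase n → Phase n) := rfl
    rw [this]; exact hmap
  calc ∫ z : Phase n, F z = ∫ z : Phase n, F z ∂(Measure.map (e.toMeasurableEquiv : Phase n → Phase n) volume) := by rw [hmap']
    _ = ∫ z : Phase n, F (e.toMeasurableEquiv z) := MeasureTheory.integral_map_equiv _ _
    _ = ∫ z : Phase n, a z * L2inner ψ (HW ℏ (S z) φ) * L2inner (HW ℏ (S z) φ) χ := by
        congr 1; funext z; exact hFS z
end
end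

section
/- Let μ ∈ L¹(ℝ²ⁿ) with μ ≥ 0 almost everywhere and ∫_{ℝ²ⁿ} μ(z) dz = 1, and let φ ∈ L²(ℝⁿ) with ‖φ‖_{L²} = 1. Define ρ̂ : L²(ℝⁿ) → L²(ℝⁿ) by the Bochner integral ρ̂ψ = ∫_{ℝ²ⁿ} μ(z) (ψ|T(z)φ) T(z)φ dz (the integrand is Bochner integrable since ‖μ(z)(ψ|T(z)φ)T(z)φ‖ ≤ μ(z)‖ψ‖). Then: (i) ρ̂ is a bounded linear operator; (ii) for every ψ ∈ L²(ℝⁿ), (ρ̂ψ|ψ) = ∫ μ(z) |(ψ|T(z)φ)|² dz, which is real and ≥ 0, so ρ̂ is positive semidefinite and self-adjoint; (iii) for every Hilbert (orthonormal) basis (eᵢ) of L²(ℝⁿ), the family i ↦ (ρ̂eᵢ|eᵢ) is summable with sum 1, i.e. ρ̂ has trace 1. -/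
open MeasureTheory Complex Real Filter

noncomputable section

lemma countable_index_of_orthonormal {E : Type*} [NormedAddCommGroup E] [InnerProductSpace ℂ E]
    [SecondCountableTopology E] {ι : Type*} {v : ι → E} (hv : Orthonormal ℂ v) : Countable ι := by
  obtain ⟨D, hDc, hDd⟩ := TopologicalSpace.exists_countable_dense E
  have hdist : ∀ i j, i ≠ j → (1 : ℝ) ≤ dist (v i) (v j) := by
    intro i j hij
    have h2 : dist (v i) (v j) ^ 2 = 2 := by
      rw [dist_eq_norm, @norm_sub_sq ℂ, hv.1 i, hv.1 j, hv.2 hij]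
      norm_num
    nlinarith [dist_nonneg (x := v i) (y := v j)]
  choose f hfD hf using fun i => hDd.exists_dist_lt (v i) (by norm_num : (0:ℝ) < 1/2)
  have hinj : Function.Injective f := by
    intro i j hfeq
    by_contra hij
    have h1 := hdist i j hij
    have h3 : dist (v i) (v j) ≤ dist (v i) (f i) + dist (f j) (v j) := by
      rw [hfeq]; exact dist_triangle _ _ _
    have h4 := hf i
    have h5 := hf j
    rw [dist_comm (f j) (v j)] at h3
    linarith
  haveI : Countable D := hDc.to_subtype
  exact Function.Injective.countable (f := fun i => (⟨f i, hfD i⟩ : D))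
    fun i j h => hinj (congrArg Subtype.val h)

lemma aestronglyMeasurable_of_inner_meas {α : Type*} [MeasurableSpace α] (ν : Measure α)
    {E : Type*} [NormedAddCommGroup E] [InnerProductSpace ℂ E] [SecondCountableTopology E]
    [CompleteSpace E] {f : α → E} (hf : ∀ c : E, Measurable fun a => (inner ℂ c (f a) : ℂ)) :
    AEStronglyMeasurable f ν := by
  obtain ⟨w, b, hb⟩ := exists_hilbertBasis ℂ E
  haveI : Countable w := countable_index_of_orthonormal b.orthonormal
  refine aestronglyMeasurable_of_tendsto_ae (atTop : Filter (Finset w))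
    (f := fun s a => ∑ i ∈ s, (inner ℂ ((b i : E)) (f a) : ℂ) • (b i : E)) (fun s => ?_) ?_
  · exact Finset.aestronglyMeasurable_fun_sum _ fun i _ =>
      ((hf (b i)).aestronglyMeasurable).smul_const (b i : E)
  · refine Eventually.of_forall fun a => ?_
    have h := b.hasSum_repr (f a)
    simp only [HilbertBasis.repr_apply_apply] at h
    exact h


set_option maxHeartbeats 2000000 in
/-- For a probability density `μ` on phase space and a normalized window `φ ∈ L²(ℝⁿ)`,
the operator `ρ̂ψ = ∫ μ(z)(ψ|T(z)φ) T(z)φ dz` is a bounded, positive semidefinite,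
self-adjoint operator of trace one, i.e. a density operator. Here `T` is the family of
Heisenberg–Weyl operators, realized as unitaries of `L²(ℝⁿ)`. -/
theorem toeplitz_density_operator (ℏ : ℝ) (hℏ : 0 < ℏ) (n : ℕ) (hn : 1 ≤ n)
    (T : Phase n →
      (Lp ℂ 2 (volume : Measure (Fin n → ℝ)) ≃ₗᵢ[ℂ] Lp ℂ 2 (volume : Measure (Fin n → ℝ))))
    (hT : ∀ (z : Phase n) (f : Lp ℂ 2 (volume : Measure (Fin n → ℝ))),
      (T z f : (Fin n → ℝ) → ℂ) =ᵐ[(volume : Measure (Fin n → ℝ))] HW ℏ z (⇑f))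
    (μ : Phase n → ℝ) (hμint : MeasureTheory.Integrable μ (volume : Measure (Phase n)))
    (hμpos : ∀ᵐ z ∂(volume : Measure (Phase n)), 0 ≤ μ z)
    (hμ1 : ∫ z : Phase n, μ z = 1)
    (φ : Lp ℂ 2 (volume : Measure (Fin n → ℝ))) (hφ : ‖φ‖ = 1) :
    ∃ R : Lp ℂ 2 (volume : Measure (Fin n → ℝ)) →L[ℂ]
        Lp ℂ 2 (volume : Measure (Fin n → ℝ)),
      -- (i) ρ̂ is given by the Bochner integral
      (∀ ψ, R ψ = ∫ z : Phase n, ((μ z : ℂ) * (inner ℂ ((T z) φ) ψ : ℂ)) • ((T z) φ)) ∧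
      -- (ii) positivity: (ρ̂ψ|ψ) = ∫ μ(z)|(ψ|T(z)φ)|² dz ≥ 0 ...
      (∀ ψ, (inner ℂ ψ (R ψ) : ℂ) = ((∫ z : Phase n, μ z * ‖(inner ℂ ((T z) φ) ψ : ℂ)‖ ^ 2 : ℝ) : ℂ)) ∧
      (∀ ψ, (0 : ℝ) ≤ ∫ z : Phase n, μ z * ‖(inner ℂ ((T z) φ) ψ : ℂ)‖ ^ 2) ∧
      -- ... and self-adjointness
      (∀ ψ χ, (inner ℂ (R ψ) χ : ℂ) = (inner ℂ ψ (R χ) : ℂ)) ∧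
      -- (iii) trace one: for every Hilbert basis, Σᵢ (ρ̂eᵢ|eᵢ) = 1
      (∀ (ι : Type) (e : HilbertBasis ι ℂ (Lp ℂ 2 (volume : Measure (Fin n → ℝ)))),
        HasSum (fun i => (inner ℂ (e i) (R (e i)) : ℂ)) 1) := by
  classical
  haveI : Fact ((2 : ENNReal) ≠ ⊤) := ⟨by norm_num⟩
  -- measurability of z ↦ ⟪T z φ, ψ⟫
  have hmeas : ∀ ψ : Lp ℂ 2 (volume : Measure (Fin n → ℝ)),
      Measurable fun z : Phase n => (inner ℂ ((T z) φ) ψ : ℂ) := by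
    intro ψ
    have h1 : Continuous fun p : Phase n × (Fin n → ℝ) =>
        Complex.exp (Complex.I / (ℏ : ℂ) *
          ((dotR p.1.2 p.2 - dotR p.1.2 p.1.1 / 2 : ℝ) : ℂ)) := by
      apply Complex.continuous_exp.comp
      apply Continuous.mul continuous_const
      apply Complex.continuous_ofReal.comp
      unfold dotR
      fun_prop
    have h2 : StronglyMeasurable fun p : Phase n × (Fin n → ℝ) =>
        (⇑φ : (Fin n → ℝ) → ℂ) (p.2 - p.1.1) :=
      (Lp.stronglyMeasurable φ).comp_measurable (measurable_snd.sub measurable_fst.fst)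
    have h3 : StronglyMeasurable fun p : Phase n × (Fin n → ℝ) =>
        (ψ : (Fin n → ℝ) → ℂ) p.2 :=
      (Lp.stronglyMeasurable ψ).comp_measurable measurable_snd
    have hK : StronglyMeasurable fun p : Phase n × (Fin n → ℝ) =>
        (starRingEnd ℂ) (HW ℏ p.1 (⇑φ) p.2) * (ψ : (Fin n → ℝ) → ℂ) p.2 := by
      unfold HW
      exact ((RCLike.continuous_conj.comp_stronglyMeasurable
        (h1.stronglyMeasurable.mul h2))).mul h3
    have hint : StronglyMeasurable fun z : Phase n =>
        ∫ x, (starRingEnd ℂ) (HW ℏ z (⇑φ) x) * ψ x := hK.integral_prod_right'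
    have heq : (fun z : Phase n => (inner ℂ ((T z) φ) ψ : ℂ)) =
        fun z => ∫ x, (starRingEnd ℂ) (HW ℏ z (⇑φ) x) * ψ x := by
      funext z
      rw [L2.inner_def]
      simp_rw [RCLike.inner_apply]
      refine integral_congr_ae ?_
      filter_upwards [hT z φ] with x hx
      rw [hx, mul_comm]
    rw [heq]
    exact hint.measurable
  have hTm : AEStronglyMeasurable
      (fun z : Phase n => ((T z) φ : Lp ℂ 2 (volume : Measure (Fin n → ℝ)))) volume := by
    apply aestronglyMeasurable_of_inner_meas
    intro c
    have h : (fun z : Phase n => (inner ℂ c ((T z) φ) : ℂ)) =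
        fun z => (starRingEnd ℂ) (inner ℂ ((T z) φ) c : ℂ) := by
      funext z; rw [inner_conj_symm]
    rw [h]
    exact RCLike.continuous_conj.measurable.comp (hmeas c)
  have hnorm : ∀ z : Phase n, ‖((T z) φ : Lp ℂ 2 (volume : Measure (Fin n → ℝ)))‖ = 1 :=
    fun z => by rw [LinearIsometryEquiv.norm_map]; exact hφ
  set G : Lp ℂ 2 (volume : Measure (Fin n → ℝ)) → Phase n →
      Lp ℂ 2 (volume : Measure (Fin n → ℝ)) :=
    fun ψ z => ((μ z : ℂ) * (inner ℂ ((T z) φ) ψ : ℂ)) • ((T z) φ) with hG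
  have hGmeas : ∀ ψ, AEStronglyMeasurable (G ψ) volume := by
    intro ψ
    exact (((Complex.measurable_ofReal.comp_aemeasurable hμint.aemeasurable).mul
      (hmeas ψ).aemeasurable).aestronglyMeasurable).smul hTm
  have hGbound : ∀ ψ (z : Phase n), ‖G ψ z‖ ≤ ‖ψ‖ * ‖μ z‖ := by
    intro ψ z
    simp only [hG]
    rw [norm_smul, hnorm z, mul_one, norm_mul]
    have h1 : ‖(inner ℂ ((T z) φ) ψ : ℂ)‖ ≤ ‖((T z) φ : Lp ℂ 2 _)‖ * ‖ψ‖ :=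
      norm_inner_le_norm _ _
    rw [hnorm z, one_mul] at h1
    have h2 : ‖((μ z : ℝ) : ℂ)‖ = ‖μ z‖ := by simp [Complex.norm_real]
    calc ‖((μ z : ℝ) : ℂ)‖ * ‖(inner ℂ ((T z) φ) ψ : ℂ)‖
        ≤ ‖μ z‖ * ‖ψ‖ := by rw [h2]; exact mul_le_mul_of_nonneg_left h1 (norm_nonneg _)
      _ = ‖ψ‖ * ‖μ z‖ := by ring
  have hGint : ∀ ψ, Integrable (G ψ) volume := by
    intro ψ
    exact Integrable.mono' (hμint.norm.const_mul ‖ψ‖) (hGmeas ψ)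
      (Eventually.of_forall fun z => hGbound ψ z)
  set Rlin : Lp ℂ 2 (volume : Measure (Fin n → ℝ)) →ₗ[ℂ]
      Lp ℂ 2 (volume : Measure (Fin n → ℝ)) :=
    { toFun := fun ψ => ∫ z, G ψ z
      map_add' := by
        intro ψ χ
        show (∫ z, G (ψ + χ) z) = (∫ z, G ψ z) + ∫ z, G χ z
        rw [← integral_add (hGint ψ) (hGint χ)]
        congr 1
        funext z
        simp only [hG]
        rw [inner_add_right, mul_add, add_smul]
      map_smul' := by
        intro c ψ
        show (∫ z, G (c • ψ) z) = c • ∫ z, G ψ z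
        rw [← integral_smul]
        congr 1
        funext z
        simp only [hG]
        rw [inner_smul_right, smul_smul]
        ring_nf } with hRlin
  have hRbound : ∀ ψ, ‖Rlin ψ‖ ≤ (∫ z, ‖μ z‖) * ‖ψ‖ := by
    intro ψ
    have h1 : ‖Rlin ψ‖ ≤ ∫ z, ‖ψ‖ * ‖μ z‖ := by
      refine norm_integral_le_of_norm_le (hμint.norm.const_mul ‖ψ‖) ?_
      exact Eventually.of_forall fun z => hGbound ψ z
    rwa [integral_const_mul, mul_comm ‖ψ‖] at h1
  set R : Lp ℂ 2 (volume : Measure (Fin n → ℝ)) →L[ℂ]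
      Lp ℂ 2 (volume : Measure (Fin n → ℝ)) :=
    Rlin.mkContinuous (∫ z, ‖μ z‖) hRbound with hR
  have hRapp : ∀ ψ, R ψ = ∫ z, G ψ z := fun ψ => rfl
  have key : ∀ ψ χ, (inner ℂ χ (R ψ) : ℂ) =
      ∫ z, (μ z : ℂ) * (inner ℂ ((T z) φ) ψ : ℂ) * (inner ℂ χ ((T z) φ) : ℂ) := by
    intro ψ χ
    have hcomp := ContinuousLinearMap.integral_comp_comm (innerSL ℂ χ) (hGint ψ)
    calc (inner ℂ χ (R ψ) : ℂ) = ∫ z, (innerSL ℂ χ) (G ψ z) := by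
          rw [hRapp ψ]; exact hcomp.symm
      _ = ∫ z, (μ z : ℂ) * (inner ℂ ((T z) φ) ψ : ℂ) * (inner ℂ χ ((T z) φ) : ℂ) := by
          congr 1
          funext z
          simp only [hG, innerSL_apply_apply, inner_smul_right]
  have key2 : ∀ ψ, (inner ℂ ψ (R ψ) : ℂ) =
      ((∫ z : Phase n, μ z * ‖(inner ℂ ((T z) φ) ψ : ℂ)‖ ^ 2 : ℝ) : ℂ) := by
    intro ψ
    rw [key ψ ψ]
    have h : (fun z : Phase n =>
        (μ z : ℂ) * (inner ℂ ((T z) φ) ψ : ℂ) * (inner ℂ ψ ((T z) φ) : ℂ)) =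
        fun z => ((μ z * ‖(inner ℂ ((T z) φ) ψ : ℂ)‖ ^ 2 : ℝ) : ℂ) := by
      funext z
      rw [← inner_conj_symm ψ ((T z) φ), mul_assoc, Complex.mul_conj,
        Complex.normSq_eq_norm_sq, ← Complex.ofReal_mul]
    rw [h]
    exact integral_ofReal
  refine ⟨R, hRapp, key2, ?_, ?_, ?_⟩
  · intro ψ
    refine integral_nonneg_of_ae ?_
    filter_upwards [hμpos] with z hz
    positivity
  · intro ψ χ
    rw [← inner_conj_symm (R ψ) χ, key ψ χ, ← integral_conj, key χ ψ]
    congr 1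
    funext z
    rw [map_mul, map_mul, Complex.conj_ofReal, inner_conj_symm, inner_conj_symm]
    ring
  · intro ι e
    haveI : Countable ι := countable_index_of_orthonormal e.orthonormal
    set g : ι → Phase n → ℝ :=
      fun i z => μ z * ‖(inner ℂ ((T z) φ) (e i) : ℂ)‖ ^ 2 with hg
    have hgm : ∀ i, AEStronglyMeasurable (g i) volume := fun i =>
      (hμint.aemeasurable.mul
        (((hmeas (e i)).norm.pow_const 2).aemeasurable)).aestronglyMeasurable
    have hinner_le : ∀ (i : ι) (z : Phase n), ‖(inner ℂ ((T z) φ) (e i) : ℂ)‖ ≤ 1 := by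
      intro i z
      have h1 := norm_inner_le_norm (𝕜 := ℂ) ((T z) φ) (e i)
      rwa [hnorm z, (e.orthonormal).1 i, one_mul] at h1
    have hgb : ∀ i (z : Phase n), ‖g i z‖ ≤ ‖μ z‖ := by
      intro i z
      simp only [hg]
      rw [norm_mul]
      have h2 : ‖‖(inner ℂ ((T z) φ) (e i) : ℂ)‖ ^ 2‖ ≤ 1 := by
        rw [Real.norm_of_nonneg (by positivity)]
        nlinarith [hinner_le i z, norm_nonneg (inner ℂ ((T z) φ) (e i) : ℂ)]
      calc ‖μ z‖ * ‖‖(inner ℂ ((T z) φ) (e i) : ℂ)‖ ^ 2‖ ≤ ‖μ z‖ * 1 :=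
            mul_le_mul_of_nonneg_left h2 (norm_nonneg _)
        _ = ‖μ z‖ := mul_one _
    have hgint : ∀ i, Integrable (g i) volume := fun i =>
      Integrable.mono' hμint.norm (hgm i) (Eventually.of_forall fun z => hgb i z)
    have hpar : ∀ z : Phase n,
        HasSum (fun i => ‖(inner ℂ ((T z) φ) (e i) : ℂ)‖ ^ 2) 1 := by
      intro z
      have h := e.hasSum_inner_mul_inner ((T z) φ) ((T z) φ)
      refine Complex.hasSum_ofReal.mp ?_
      have hfe : (fun i => ((‖(inner ℂ ((T z) φ) (e i) : ℂ)‖ ^ 2 : ℝ) : ℂ)) =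
          fun i => (inner ℂ ((T z) φ) (e i) : ℂ) * (inner ℂ (e i) ((T z) φ) : ℂ) := by
        funext i
        rw [← inner_conj_symm (e i) ((T z) φ), RCLike.mul_conj]
        norm_cast
      rw [hfe]
      have h1 : ((1:ℝ) : ℂ) = (inner ℂ ((T z) φ) ((T z) φ) : ℂ) := by
        rw [inner_self_eq_norm_sq_to_K, hnorm z]
        norm_num
      rw [h1]
      exact h
    have hpt : ∀ z : Phase n, HasSum (fun i => g i z) (μ z) := by
      intro z
      simpa using (hpar z).mul_left (μ z)
    have hnn : ∀ i, (0:ℝ) ≤ ∫ z, g i z := by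
      intro i
      refine integral_nonneg_of_ae ?_
      filter_upwards [hμpos] with z hz
      simp only [hg]
      positivity
    have hsum1 : Summable fun i => ∫ z, g i z := by
      apply summable_of_sum_le hnn
      intro s
      rw [← integral_finset_sum s fun i _ => hgint i]
      refine integral_mono_ae (integrable_finset_sum s fun i _ => hgint i) hμint.norm ?_
      filter_upwards [hμpos] with z hz
      have hb : ∑ i ∈ s, ‖(inner ℂ ((T z) φ) (e i) : ℂ)‖ ^ 2 ≤ 1 := by
        have hbl := (e.orthonormal).sum_inner_products_le (s := s) (x := (T z) φ)
        rw [hnorm z, one_pow] at hbl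
        refine le_trans (le_of_eq (Finset.sum_congr rfl fun i _ => ?_)) hbl
        rw [norm_inner_symm]
      have hes : ∑ i ∈ s, g i z = μ z * ∑ i ∈ s, ‖(inner ℂ ((T z) φ) (e i) : ℂ)‖ ^ 2 := by
        simp only [hg]; rw [Finset.mul_sum]
      rw [hes, Real.norm_of_nonneg hz]
      have hsnn : (0:ℝ) ≤ ∑ i ∈ s, ‖(inner ℂ ((T z) φ) (e i) : ℂ)‖ ^ 2 :=
        Finset.sum_nonneg fun i _ => by positivity
      nlinarith
    have hsumnorm : Summable fun i => ∫ z, ‖g i z‖ := by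
      have heqn : ∀ i, (∫ z, ‖g i z‖) = ∫ z, g i z := by
        intro i
        refine integral_congr_ae ?_
        filter_upwards [hμpos] with z hz
        simp only [hg]
        rw [Real.norm_of_nonneg (by positivity)]
      simp only [heqn]
      exact hsum1
    have hmain : HasSum (fun i => ∫ z, g i z) 1 := by
      have h := hasSum_integral_of_summable_integral_norm hgint hsumnorm
      have htsum : ∀ z : Phase n, (∑' i, g i z) = μ z := fun z => (hpt z).tsum_eq
      simp only [htsum] at h
      rwa [hμ1] at h
    have hfin : HasSum (fun i => (((∫ z, g i z : ℝ)) : ℂ)) (((1:ℝ)) : ℂ) :=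
      hmain.mapL Complex.ofRealCLM
    norm_num at hfin
    convert hfin using 2 with i
    exact key2 (e i)
end
end
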